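/- If a closed convex subset C of a Banach space X is uniformly proximinal, then C is strongly proximinal: C is proximinal, and for every x ∈ X and ε > 0 there exists δ > 0 such that P_C(x, δ) ⊆ P_C(x) + ε B_X, where P_C(x, δ) = {z ∈ C : ‖x − z‖ ≤ d(x, C) + δ}. -/
import Mathlib


/-- A uniformly proximinal nonempty closed convex subset `C` of a Banach
space `X` is strongly proximinal: `C` is proximinal and for every `x ∈ X`, `ε > 0` there
is `δ > 0` with `P_C(x, δ) ⊆ P_C(x) + ε B_X`. -/
theorem stmt_5 {X : Type*} [NormedAddCommGroup X] [NormedSpace ℝ X] [CompleteSpace X]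
    (C : Set X) (hne : C.Nonempty) (hcl : IsClosed C) (hcv : Convex ℝ C)
    (hunif : ∀ ε > (0 : ℝ), ∀ R > (0 : ℝ), ∃ δ > (0 : ℝ), ∀ x ∈ {x : X | Metric.infDist x C ≤ R},
      ∀ y ∈ C, ‖x - y‖ < R + δ → ∃ y' ∈ C, ‖y - y'‖ < ε ∧ ‖x - y'‖ ≤ R) :
    (∀ x : X, ∃ z ∈ C, ‖x - z‖ = Metric.infDist x C) ∧
    (∀ x : X, ∀ ε > (0 : ℝ), ∃ δ > (0 : ℝ), ∀ z ∈ C,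
      ‖x - z‖ ≤ Metric.infDist x C + δ →
      ∃ w, (w ∈ C ∧ ‖x - w‖ = Metric.infDist x C) ∧ ‖z - w‖ ≤ ε) := by
  have key : ∀ x : X, ∀ ε > (0:ℝ), ∃ δ > (0:ℝ), ∀ z ∈ C,
      ‖x - z‖ ≤ Metric.infDist x C + δ →
      ∃ w, (w ∈ C ∧ ‖x - w‖ = Metric.infDist x C) ∧ ‖z - w‖ ≤ ε := by
    intro x ε hε
    by_cases hd : Metric.infDist x C > 0
    · obtain ⟨δ, hδ, h⟩ := hunif ε hε _ hd
      refine ⟨δ/2, by linarith, ?_⟩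
      intro z hz hzle
      obtain ⟨y', hy'C, hy'ε, hy'R⟩ := h x (Set.mem_setOf_eq ▸ le_refl _) z hz (by linarith)
      have hge : Metric.infDist x C ≤ ‖x - y'‖ := by
        rw [← dist_eq_norm]; exact Metric.infDist_le_dist_of_mem hy'C
      exact ⟨y', ⟨hy'C, le_antisymm hy'R hge⟩, le_of_lt hy'ε⟩
    · push_neg at hd
      have hd0 : Metric.infDist x C = 0 := le_antisymm hd Metric.infDist_nonneg
      have hxC : x ∈ C := by
        rw [← hcl.closure_eq]
        exact (Metric.mem_closure_iff_infDist_zero hne).mpr hd0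
      refine ⟨ε, hε, fun z hz hzle => ⟨x, ⟨hxC, by rw [hd0, sub_self, norm_zero]⟩, ?_⟩⟩
      rw [hd0, zero_add] at hzle
      rw [← norm_neg, neg_sub]
      exact hzle
  refine ⟨fun x => ?_, key⟩
  obtain ⟨δ, hδ, h⟩ := key x 1 one_pos
  obtain ⟨z, hzC, hzd⟩ := (Metric.infDist_lt_iff hne).mp
    (show Metric.infDist x C < Metric.infDist x C + δ by linarith)
  obtain ⟨w, ⟨hwC, hwd⟩, -⟩ := h z hzC (by rw [← dist_eq_norm]; linarith)
  exact ⟨w, hwC, hwd⟩
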